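/- Let m, n ≥ 1 and let L_m, L_n be unary languages of state complexity at most m and n respectively, both infinite. Then every word a^t with t ≥ m + n − 1 belongs to L_m ⊙ L_n; consequently the state complexity of L_m ⊙ L_n is at most m + n. -/

import Mathlib

/-- Overlap assembly of two languages. -/
def langOA {α : Type*} (L₁ L₂ : Language α) : Language α :=
  {z | ∃ u v w : List α, v ≠ [] ∧ u ++ v ∈ L₁ ∧ v ++ w ∈ L₂ ∧ z = u ++ v ++ w}

/-- `scLe L k` : the state complexity of `L` is at most `k`. -/
def scLe {α : Type*} (L : Language α) (k : ℕ) : Prop :=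
  ∃ (Q : Type) (_ : Fintype Q) (M : DFA α Q), Fintype.card Q ≤ k ∧ M.accepts = L

/-- The unary word `a^k`. -/
def urep (k : ℕ) : List Unit := List.replicate k ()

lemma urep_append (x y : ℕ) : urep x ++ urep y = urep (x + y) := by
  rw [urep, urep, urep, List.replicate_add]

lemma list_unit_eq (l : List Unit) : l = urep l.length := by
  induction l with
  | nil => rfl
  | cons a t ih => simp [urep, List.replicate_succ] at *; exact ih

lemma urep_succ (t : ℕ) : urep (t + 1) = urep t ++ [()] := by
  simp [urep]
  rw [← List.replicate_succ']

lemma eval_succ {Q : Type} (M : DFA Unit Q) (t : ℕ) :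
    M.eval (urep (t + 1)) = M.step (M.eval (urep t)) () := by
  rw [urep_succ]
  exact M.evalFrom_append_singleton M.start _ _

lemma unary_ap (L : Language Unit) (m : ℕ) (hm : 1 ≤ m) (h : scLe L m)
    (hinf : L.Infinite) :
    ∃ ℓ p : ℕ, ℓ < m ∧ 1 ≤ p ∧ p ≤ m ∧ ∀ k, urep (ℓ + k * p) ∈ L := by
  obtain ⟨Q, _, M, hcard, hacc⟩ := h
  set f : ℕ → Q := fun t => M.eval (urep t) with hf
  have key : ∀ a b : ℕ, a < b → b ≤ m → f a = f b →
      ∃ ℓ p : ℕ, ℓ < m ∧ 1 ≤ p ∧ p ≤ m ∧ ∀ k, urep (ℓ + k * p) ∈ L := by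
    intro a b hab hbm hfab
    set p := b - a with hp
    have hp1 : 1 ≤ p := by omega
    -- shift lemma
    have hshift : ∀ k, f (a + k) = f (a + k + p) := by
      intro k
      induction k with
      | zero =>
          have hb : a + 0 + p = b := by omega
          rw [hb]; simpa using hfab
      | succ k ih =>
          have h1 : f (a + (k + 1)) = M.step (f (a + k)) () := eval_succ M _
          have h2 : f (a + (k + 1) + p) = M.step (f (a + k + p)) () := by
            have : a + (k + 1) + p = (a + k + p) + 1 := by omega
            rw [this]; exact eval_succ M _
          rw [h1, h2, ih]
    have hper : ∀ r j, f (a + r) = f (a + r + j * p) := by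
      intro r j
      induction j with
      | zero => simp
      | succ j ih =>
          have : a + r + (j + 1) * p = a + (r + j * p) + p := by ring
          rw [this, ← hshift (r + j * p)]
          simpa [Nat.add_assoc] using ih
    -- a long word in L
    have hlen : {t : ℕ | urep t ∈ L}.Infinite := by
      have : (fun l : List Unit => l.length) '' (L : Set (List Unit)) ⊆
          {t : ℕ | urep t ∈ L} := by
        rintro t ⟨l, hl, rfl⟩
        show urep l.length ∈ L
        rw [← list_unit_eq l]; exact hl
      refine Set.Infinite.mono this (Set.Infinite.image ?_ hinf)
      intro x _ y _ hxy
      have hxy' : x.length = y.length := hxy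
      rw [list_unit_eq x, list_unit_eq y, hxy']
    obtain ⟨t, ht, hta⟩ := hlen.exists_gt a
    set r := (t - a) % p with hr
    have hrp : r < p := Nat.mod_lt _ hp1
    set ℓ := a + r with hℓ
    refine ⟨ℓ, p, by omega, hp1, by omega, ?_⟩
    have hfl : f ℓ = f t := by
      have hdiv : t = a + r + ((t - a) / p) * p := by
        have := Nat.div_add_mod' (t - a) p
        omega
      rw [hdiv] at *
      exact hper r _
    intro k
    have : f (ℓ + k * p) = f t := by rw [← hfl]; exact (hper r k).symm
    have hmem : urep t ∈ M.accepts := by rw [hacc]; exact ht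
    rw [← hacc]
    show M.eval _ ∈ M.accept
    rw [show M.eval (urep (ℓ + k * p)) = f (ℓ + k * p) from rfl, this]
    exact hmem
  obtain ⟨i, j, hij, hfij⟩ := Fintype.exists_ne_map_eq_of_card_lt
    (fun i : Fin (m + 1) => f i.val) (by simpa using Nat.lt_succ_of_le hcard)
  rcases lt_trichotomy i.val j.val with hlt | heq | hgt
  · exact key i.val j.val hlt (by omega) hfij
  · exact absurd (Fin.ext heq) hij
  · exact key j.val i.val hgt (by omega) hfij.symm

theorem unary_infinite_oa_upper_bound (m n : ℕ) (hm : 1 ≤ m) (hn : 1 ≤ n)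
    (L₁ L₂ : Language Unit) (h₁ : scLe L₁ m) (h₂ : scLe L₂ n)
    (hinf₁ : L₁.Infinite) (hinf₂ : L₂.Infinite) :
    (∀ t, m + n - 1 ≤ t → urep t ∈ langOA L₁ L₂) ∧ scLe (langOA L₁ L₂) (m + n) := by
  obtain ⟨ℓ₁, p₁, hℓ₁, hp₁, hp₁m, hAP₁⟩ := unary_ap L₁ m hm h₁ hinf₁
  obtain ⟨ℓ₂, p₂, hℓ₂, hp₂, hp₂n, hAP₂⟩ := unary_ap L₂ n hn h₂ hinf₂
  have part1 : ∀ t, m + n - 1 ≤ t → urep t ∈ langOA L₁ L₂ := by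
    intro t ht
    set s := ℓ₁ + ((t - ℓ₁) / p₁) * p₁ with hs
    set r := ℓ₂ + ((t - ℓ₂) / p₂) * p₂ with hrr
    have hsL : urep s ∈ L₁ := hAP₁ _
    have hrL : urep r ∈ L₂ := hAP₂ _
    have hs1 : s ≤ t ∧ t < s + p₁ := by
      have := Nat.div_add_mod' (t - ℓ₁) p₁
      have := Nat.mod_lt (t - ℓ₁) hp₁
      omega
    have hr1 : r ≤ t ∧ t < r + p₂ := by
      have := Nat.div_add_mod' (t - ℓ₂) p₂
      have := Nat.mod_lt (t - ℓ₂) hp₂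
      omega
    have hbig : t + 1 ≤ s + r := by omega
    refine ⟨urep (t - r), urep (s + r - t), urep (t - s), ?_, ?_, ?_, ?_⟩
    · simp only [urep, ne_eq, List.replicate_eq_nil_iff]
      omega
    · rw [urep_append, show t - r + (s + r - t) = s by omega]; exact hsL
    · rw [urep_append, show s + r - t + (t - s) = r by omega]; exact hrL
    · rw [urep_append, urep_append,
        show t - r + (s + r - t) + (t - s) = t by omega]
  refine ⟨part1, ?_⟩
  -- build the DFA
  have hmn : 0 < m + n := by omega
  set K := m + n - 1 with hK
  set M : DFA Unit (Fin (m + n)) :=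
    { step := fun q _ => ⟨min (q.val + 1) K, by omega⟩
      start := ⟨0, hmn⟩
      accept := {q | urep q.val ∈ langOA L₁ L₂} } with hM
  refine ⟨Fin (m + n), inferInstance, M, by simp, ?_⟩
  have hev : ∀ t : ℕ, M.eval (urep t) = ⟨min t K, by omega⟩ := by
    intro t
    induction t with
    | zero =>
        show M.start = _
        exact Fin.ext (by simp [hM])
    | succ t ih =>
        rw [eval_succ, ih]
        exact Fin.ext (by simp [hM]; omega)
  ext l
  rw [DFA.mem_accepts]
  have hl : l = urep l.length := list_unit_eq l
  rw [hl, hev]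
  show urep (min l.length K) ∈ langOA L₁ L₂ ↔ urep l.length ∈ langOA L₁ L₂
  rcases le_or_gt l.length K with h | h
  · rw [min_eq_left h]
  · rw [min_eq_right (le_of_lt h)]
    constructor
    · intro _; exact part1 _ (by omega)
    · intro _; exact part1 _ (by omega)
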